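/- Let T > 0 and let u, v : [0,T] × ℝ → ℝ be twice continuously differentiable with u(t,x) > 0 and v(t,x) > 0 everywhere, satisfying ∂_t u = ∂_x(u ∂_x(u+v)) and ∂_t v = ∂_x(v ∂_x(u+v)) on (0,T) × ℝ. Assume there exists R > 0 such that u(t,x) = v(t,x) for all t ∈ [0,T] and |x| ≥ R, that u(t,·) and v(t,·) are integrable with ∫_ℝ u(t,x) dx = ∫_ℝ v(t,x) dx for each t, and that u(0,x) = v(0,x) for all x ∈ ℝ. Then u(t,x) = v(t,x) for all (t,x) ∈ [0,T] × ℝ; consequently u = v = (1/2) w, where w = u + v solves ∂_t w = (1/2) ∂_xx(w²). -/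

import Mathlib

open Real Set MeasureTheory
open Function Filter Topology
open scoped Interval

private lemma slice_snd {E : Type*} [NormedAddCommGroup E] [NormedSpace ℝ E]
    {F : ℝ × ℝ → E} {S : Set (ℝ × ℝ)} {L : ℝ × ℝ →L[ℝ] E} {t x : ℝ}
    (hf : HasFDerivWithinAt F L S (t, x))
    (hmem : ∀ y : ℝ, ((t, y) : ℝ × ℝ) ∈ S) :
    HasDerivAt (fun y => F (t, y)) (L (0, 1)) x := by
  have hc : HasDerivAt (fun y : ℝ => ((t, y) : ℝ × ℝ)) ((0 : ℝ), (1 : ℝ)) x :=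
    (hasDerivAt_const x t).prodMk (hasDerivAt_id x)
  have h2 := hf.comp_hasDerivWithinAt x (hc.hasDerivWithinAt (s := univ))
    (fun y _ => hmem y)
  rw [hasDerivWithinAt_univ] at h2
  exact h2

private lemma slice_fst {E : Type*} [NormedAddCommGroup E] [NormedSpace ℝ E]
    {F : ℝ × ℝ → E} {L : ℝ × ℝ →L[ℝ] E} {t x : ℝ}
    (hf : HasFDerivAt F L (t, x)) :
    HasDerivAt (fun s => F (s, x)) (L (1, 0)) t := by
  have hc : HasDerivAt (fun s : ℝ => ((s, x) : ℝ × ℝ)) ((1 : ℝ), (0 : ℝ)) t :=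
    (hasDerivAt_id t).prodMk (hasDerivAt_const t x)
  exact hf.comp_hasDerivAt t hc

/-- Partial derivative in the first (time) variable. -/
noncomputable def pt (f : ℝ → ℝ → ℝ) (t x : ℝ) : ℝ := deriv (fun s => f s x) t

/-- Partial derivative in the second (space) variable. -/
noncomputable def px (f : ℝ → ℝ → ℝ) (t x : ℝ) : ℝ := deriv (fun y => f t y) x

/-- Uniqueness for equal initial data: for positive solutions of
`∂ₜu = ∂ₓ(u ∂ₓ(u+v))`, `∂ₜv = ∂ₓ(v ∂ₓ(u+v))` on `(0,T) × ℝ` agreeing outside a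
compact set, with equal masses and `u(0,·) = v(0,·)`, one has `u = v = (1/2)w`
where `w = u + v` solves the Boussinesq equation `∂ₜw = (1/2)∂ₓₓ(w²)`. -/
theorem stmt_13 (T : ℝ) (hT : 0 < T) (u v : ℝ → ℝ → ℝ)
    (husmooth : ContDiffOn ℝ 2 (Function.uncurry u) (Icc 0 T ×ˢ univ))
    (hvsmooth : ContDiffOn ℝ 2 (Function.uncurry v) (Icc 0 T ×ˢ univ))
    (hupos : ∀ t x : ℝ, 0 < u t x) (hvpos : ∀ t x : ℝ, 0 < v t x)
    (hu : ∀ t ∈ Ioo (0:ℝ) T, ∀ x : ℝ,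
      pt u t x = px (fun s y => u s y * px (fun a b => u a b + v a b) s y) t x)
    (hv : ∀ t ∈ Ioo (0:ℝ) T, ∀ x : ℝ,
      pt v t x = px (fun s y => v s y * px (fun a b => u a b + v a b) s y) t x)
    (R : ℝ) (hR : 0 < R)
    (hdecay : ∀ t ∈ Icc (0:ℝ) T, ∀ x : ℝ, R ≤ |x| → u t x = v t x)
    (huint : ∀ t ∈ Icc (0:ℝ) T, Integrable (u t))
    (hvint : ∀ t ∈ Icc (0:ℝ) T, Integrable (v t))
    (hmass : ∀ t ∈ Icc (0:ℝ) T, ∫ x, u t x = ∫ x, v t x)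
    (hinit : ∀ x : ℝ, u 0 x = v 0 x) :
    (∀ t ∈ Icc (0:ℝ) T, ∀ x : ℝ,
      u t x = v t x ∧ u t x = (1/2) * (u t x + v t x)) ∧
    (∀ t ∈ Ioo (0:ℝ) T, ∀ x : ℝ,
      pt (fun s y => u s y + v s y) t x
        = (1/2) * px (px (fun s y => (u s y + v s y) ^ 2)) t x) := by
  classical
  set S : Set (ℝ × ℝ) := Icc 0 T ×ˢ (univ : Set ℝ) with hSdef
  have hS : UniqueDiffOn ℝ S := (uniqueDiffOn_Icc hT).prod uniqueDiffOn_univ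
  have memS : ∀ {t : ℝ}, t ∈ Icc (0:ℝ) T → ∀ y : ℝ, ((t, y) : ℝ × ℝ) ∈ S :=
    fun ht y => ⟨ht, mem_univ y⟩
  set w : ℝ → ℝ → ℝ := fun a b => u a b + v a b with hwdef
  set φ : ℝ → ℝ → ℝ := fun a b => u a b - v a b with hφdef
  have hwsmooth : ContDiffOn ℝ 2 (uncurry w) S := husmooth.add hvsmooth
  have hφsmooth : ContDiffOn ℝ 2 (uncurry φ) S := husmooth.sub hvsmooth
  -- first-order spatial derivatives
  set Gu : ℝ × ℝ → (ℝ × ℝ →L[ℝ] ℝ) := fderivWithin ℝ (uncurry u) S with hGudef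
  set Gv : ℝ × ℝ → (ℝ × ℝ →L[ℝ] ℝ) := fderivWithin ℝ (uncurry v) S with hGvdef
  set Gw : ℝ × ℝ → (ℝ × ℝ →L[ℝ] ℝ) := fderivWithin ℝ (uncurry w) S with hGwdef
  set Gφ : ℝ × ℝ → (ℝ × ℝ →L[ℝ] ℝ) := fderivWithin ℝ (uncurry φ) S with hGφdef
  set G2 : ℝ × ℝ → (ℝ × ℝ →L[ℝ] (ℝ × ℝ →L[ℝ] ℝ)) := fderivWithin ℝ Gw S with hG2def
  have hGwcd : ContDiffOn ℝ 1 Gw S := hwsmooth.fderivWithin hS (by norm_num)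
  have hGucont : ContinuousOn Gu S := husmooth.continuousOn_fderivWithin hS one_le_two
  have hGvcont : ContinuousOn Gv S := hvsmooth.continuousOn_fderivWithin hS one_le_two
  have hGwcont : ContinuousOn Gw S := hwsmooth.continuousOn_fderivWithin hS one_le_two
  have hGφcont : ContinuousOn Gφ S := hφsmooth.continuousOn_fderivWithin hS one_le_two
  have hG2cont : ContinuousOn G2 S := hGwcd.continuousOn_fderivWithin hS le_rfl
  set A : ℝ × ℝ → ℝ := fun p => G2 p (0, 1) (0, 1) with hAdef
  set B : ℝ × ℝ → ℝ := fun p => Gw p (0, 1) with hBdef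
  set Pu : ℝ × ℝ → ℝ := fun p => Gu p (0, 1) with hPudef
  set Pv : ℝ × ℝ → ℝ := fun p => Gv p (0, 1) with hPvdef
  set Pφ : ℝ × ℝ → ℝ := fun p => Gφ p (0, 1) with hPφdef
  have hAcont : ContinuousOn A S := (hG2cont.clm_apply continuousOn_const).clm_apply continuousOn_const
  have hBcont : ContinuousOn B S := hGwcont.clm_apply continuousOn_const
  have hPucont : ContinuousOn Pu S := hGucont.clm_apply continuousOn_const
  have hPvcont : ContinuousOn Pv S := hGvcont.clm_apply continuousOn_const
  have hPφcont : ContinuousOn Pφ S := hGφcont.clm_apply continuousOn_const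
  have hΦcont : ContinuousOn (uncurry φ) S := hφsmooth.continuousOn
  -- spatial derivatives as HasDerivAt
  have hux : ∀ t ∈ Icc (0:ℝ) T, ∀ x : ℝ, HasDerivAt (fun y => u t y) (Pu (t, x)) x := by
    intro t ht x
    exact slice_snd (((husmooth.differentiableOn two_ne_zero) _ (memS ht x)).hasFDerivWithinAt)
      (memS ht)
  have hvx : ∀ t ∈ Icc (0:ℝ) T, ∀ x : ℝ, HasDerivAt (fun y => v t y) (Pv (t, x)) x := by
    intro t ht x
    exact slice_snd (((hvsmooth.differentiableOn two_ne_zero) _ (memS ht x)).hasFDerivWithinAt)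
      (memS ht)
  have hwx : ∀ t ∈ Icc (0:ℝ) T, ∀ x : ℝ, HasDerivAt (fun y => w t y) (B (t, x)) x := by
    intro t ht x
    exact slice_snd (((hwsmooth.differentiableOn two_ne_zero) _ (memS ht x)).hasFDerivWithinAt)
      (memS ht)
  have hφx : ∀ t ∈ Icc (0:ℝ) T, ∀ x : ℝ, HasDerivAt (fun y => φ t y) (Pφ (t, x)) x := by
    intro t ht x
    exact slice_snd (((hφsmooth.differentiableOn two_ne_zero) _ (memS ht x)).hasFDerivWithinAt)
      (memS ht)
  have hBx : ∀ t ∈ Icc (0:ℝ) T, ∀ x : ℝ, HasDerivAt (fun y => B (t, y)) (A (t, x)) x := by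
    intro t ht x
    have h := slice_snd (((hGwcd.differentiableOn one_ne_zero) _ (memS ht x)).hasFDerivWithinAt)
      (memS ht)
    have h2 := h.clm_apply (hasDerivAt_const x ((0 : ℝ), (1 : ℝ)))
    simpa using h2
  have hpxw : ∀ t ∈ Icc (0:ℝ) T, ∀ y : ℝ, px w t y = B (t, y) := by
    intro t ht y
    exact (hwx t ht y).deriv
  -- PDE in terms of B, A
  have hptu : ∀ t ∈ Ioo (0:ℝ) T, ∀ x : ℝ,
      pt u t x = Pu (t, x) * B (t, x) + u t x * A (t, x) := by
    intro t ht x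
    have htI : t ∈ Icc (0:ℝ) T := Ioo_subset_Icc_self ht
    rw [hu t ht x]
    show deriv (fun y => u t y * px w t y) x = _
    have hfun : (fun y => u t y * px w t y) = fun y => u t y * B (t, y) :=
      funext fun y => by rw [hpxw t htI y]
    rw [hfun]
    exact ((hux t htI x).mul (hBx t htI x)).deriv
  have hptv : ∀ t ∈ Ioo (0:ℝ) T, ∀ x : ℝ,
      pt v t x = Pv (t, x) * B (t, x) + v t x * A (t, x) := by
    intro t ht x
    have htI : t ∈ Icc (0:ℝ) T := Ioo_subset_Icc_self ht
    rw [hv t ht x]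
    show deriv (fun y => v t y * px w t y) x = _
    have hfun : (fun y => v t y * px w t y) = fun y => v t y * B (t, y) :=
      funext fun y => by rw [hpxw t htI y]
    rw [hfun]
    exact ((hvx t htI x).mul (hBx t htI x)).deriv
  -- interior neighborhoods
  have hST : ∀ t ∈ Ioo (0:ℝ) T, ∀ x : ℝ, S ∈ nhds ((t, x) : ℝ × ℝ) := by
    intro t ht x
    refine Filter.mem_of_superset
      ((isOpen_Ioo.prod isOpen_univ).mem_nhds (⟨ht, mem_univ x⟩ :
        ((t, x) : ℝ × ℝ) ∈ Ioo (0:ℝ) T ×ˢ (univ : Set ℝ))) ?_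
    exact prod_mono Ioo_subset_Icc_self (subset_refl _)
  -- time derivatives at interior points
  have hptslice : ∀ (f : ℝ → ℝ → ℝ), ContDiffOn ℝ 2 (uncurry f) S →
      ∀ t ∈ Ioo (0:ℝ) T, ∀ x : ℝ, HasDerivAt (fun s => f s x) (pt f t x) t := by
    intro f hf t ht x
    have hat : DifferentiableAt ℝ (uncurry f) (t, x) :=
      (hf.contDiffAt (hST t ht x)).differentiableAt two_ne_zero
    have h := slice_fst hat.hasFDerivAt
    have hd : pt f t x = fderiv ℝ (uncurry f) (t, x) (1, 0) := h.deriv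
    rw [hd]
    exact h

  have hptphi : ∀ t ∈ Ioo (0:ℝ) T, ∀ x : ℝ,
      HasDerivAt (fun s => φ s x) (Pφ (t, x) * B (t, x) + φ t x * A (t, x)) t := by
    intro t ht x
    have htI : t ∈ Icc (0:ℝ) T := Ioo_subset_Icc_self ht
    have hu' := hptslice u husmooth t ht x
    have hv' := hptslice v hvsmooth t ht x
    have h3 : HasDerivAt (fun s => φ s x) (pt u t x - pt v t x) t := hu'.sub hv'
    have e1 : Pφ (t, x) = Pu (t, x) - Pv (t, x) :=
      (hφx t htI x).unique ((hux t htI x).sub (hvx t htI x))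
    have e2 : φ t x = u t x - v t x := rfl
    rw [hptu t ht x, hptv t ht x] at h3
    have : Pφ (t, x) * B (t, x) + φ t x * A (t, x)
        = Pu (t, x) * B (t, x) + u t x * A (t, x)
          - (Pv (t, x) * B (t, x) + v t x * A (t, x)) := by
      rw [e1, e2]; ring
    rw [this]
    exact h3
  -- spatial slice continuity
  have sliceCont : ∀ (g : ℝ × ℝ → ℝ), ContinuousOn g S →
      ∀ s ∈ Icc (0:ℝ) T, Continuous (fun x : ℝ => g (s, x)) := by
    intro g hg s hs
    exact hg.comp_continuous (continuous_const.prodMk continuous_id)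
      (fun x => memS hs x)
  have hφslicecont : ∀ s ∈ Icc (0:ℝ) T, Continuous (fun x : ℝ => φ s x) :=
    fun s hs => sliceCont (uncurry φ) hΦcont s hs
  -- the derivative integrand
  set Ψ : ℝ → ℝ → ℝ :=
    fun s x => 2 * φ s x * (Pφ (s, x) * B (s, x) + φ s x * A (s, x)) with hΨdef
  have hΨcontS : ContinuousOn (fun p : ℝ × ℝ => Ψ p.1 p.2) S := by
    have h1 : ContinuousOn (fun p : ℝ × ℝ => φ p.1 p.2) S := hΦcont
    exact (continuousOn_const.mul h1).mul
      ((hPφcont.mul hBcont).add (h1.mul hAcont))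
  have hD : ∀ t ∈ Ioo (0:ℝ) T, ∀ x : ℝ,
      HasDerivAt (fun s => φ s x ^ 2) (Ψ t x) t := by
    intro t ht x
    have h := (hptphi t ht x).fun_pow 2
    refine h.congr_deriv ?_
    simp [hΨdef]
  -- compact bounds
  set R' : ℝ := R + 1 with hR'def
  have hR'le : -R' ≤ R' := by simp [hR'def]; linarith
  set K : Set (ℝ × ℝ) := Icc 0 T ×ˢ Icc (-R') R' with hKdef
  have hKsub : K ⊆ S := prod_mono (subset_refl _) (subset_univ _)
  have hKcomp : IsCompact K := isCompact_Icc.prod isCompact_Icc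
  have hR'pos : 0 < R' := by rw [hR'def]; linarith
  have hK0 : ((0, 0) : ℝ × ℝ) ∈ K :=
    ⟨⟨le_refl 0, hT.le⟩, ⟨by simp; linarith, by simp; linarith⟩⟩
  obtain ⟨C1, hC1⟩ := hKcomp.exists_bound_of_continuousOn (hΨcontS.mono hKsub)
  obtain ⟨CA, hCA⟩ := hKcomp.exists_bound_of_continuousOn (hAcont.mono hKsub)
  obtain ⟨CF, hCF⟩ := hKcomp.exists_bound_of_continuousOn
    ((hΦcont.mono hKsub).mul (hΦcont.mono hKsub))
  have hCA0 : 0 ≤ CA := le_trans (norm_nonneg _) (hCA _ hK0)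
  set F : ℝ → ℝ := fun t => ∫ x in (-R')..R', φ t x ^ 2 with hFdef
  have hAbsR' : R ≤ |R'| := by
    rw [abs_of_nonneg hR'pos.le, hR'def]; linarith
  have hAbsR'' : R ≤ |-R'| := by rw [abs_neg]; exact hAbsR'
  have hzero : ∀ t ∈ Icc (0:ℝ) T, φ t R' = 0 ∧ φ t (-R') = 0 := by
    intro t ht
    constructor
    · show u t R' - v t R' = 0
      rw [hdecay t ht R' hAbsR']; ring
    · show u t (-R') - v t (-R') = 0
      rw [hdecay t ht (-R') hAbsR'']; ring
  -- differentiation under the integral sign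
  have hFderiv : ∀ t ∈ Ioo (0:ℝ) T, HasDerivAt F (∫ x in (-R')..R', Ψ t x) t := by
    intro t ht
    have hε : 0 < min t (T - t) := lt_min ht.1 (by linarith [ht.2])
    have hball : Metric.ball t (min t (T - t)) ⊆ Ioo 0 T := by
      intro s hs
      rw [Real.ball_eq_Ioo] at hs
      have h1 := min_le_left t (T - t)
      have h2 := min_le_right t (T - t)
      exact ⟨by linarith [hs.1], by linarith [hs.2]⟩
    have hIoc : Ι (-R') R' = Ioc (-R') R' := uIoc_of_le hR'le
    have hmeas : ∀ᶠ s in nhds t, AEStronglyMeasurable (fun x => φ s x ^ 2)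
        (volume.restrict (Ι (-R') R')) := by
      filter_upwards [isOpen_Ioo.mem_nhds ht] with s hs
      exact ((hφslicecont s (Ioo_subset_Icc_self hs)).pow 2).aestronglyMeasurable
    have hint : IntervalIntegrable (fun x => φ t x ^ 2) volume (-R') R' :=
      ((hφslicecont t (Ioo_subset_Icc_self ht)).pow 2).intervalIntegrable _ _
    have hmeas' : AEStronglyMeasurable (fun x => Ψ t x) (volume.restrict (Ι (-R') R')) :=
      (sliceCont (fun p => Ψ p.1 p.2) hΨcontS t (Ioo_subset_Icc_self ht)).aestronglyMeasurable
    have hbound : ∀ᵐ x ∂(volume : Measure ℝ), x ∈ Ι (-R') R' →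
        ∀ s ∈ Metric.ball t (min t (T - t)), ‖Ψ s x‖ ≤ C1 := by
      refine Filter.Eventually.of_forall fun x hx s hs => ?_
      have hsI : s ∈ Icc (0:ℝ) T := Ioo_subset_Icc_self (hball hs)
      have hxI : x ∈ Icc (-R') R' := by
        rw [hIoc] at hx; exact Ioc_subset_Icc_self hx
      exact hC1 (s, x) ⟨hsI, hxI⟩
    have hdiff : ∀ᵐ x ∂(volume : Measure ℝ), x ∈ Ι (-R') R' →
        ∀ s ∈ Metric.ball t (min t (T - t)), HasDerivAt (fun s' => φ s' x ^ 2) (Ψ s x) s :=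
      Filter.Eventually.of_forall fun x _ s hs => hD s (hball hs) x
    exact (intervalIntegral.hasDerivAt_integral_of_dominated_loc_of_deriv_le (Metric.ball_mem_nhds t hε) hmeas hint
      hmeas' hbound intervalIntegrable_const hdiff).2
  -- integration by parts: the derivative equals the zero-order term
  have hFd2 : ∀ t ∈ Icc (0:ℝ) T,
      (∫ x in (-R')..R', Ψ t x) = ∫ x in (-R')..R', φ t x ^ 2 * A (t, x) := by
    intro t htI
    have hg : ∀ x : ℝ, HasDerivAt (fun y => φ t y ^ 2 * B (t, y))
        (2 * φ t x * Pφ (t, x) * B (t, x) + φ t x ^ 2 * A (t, x)) x := by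
      intro x
      have h1 : HasDerivAt (fun y => φ t y ^ 2) (2 * φ t x * Pφ (t, x)) x := by
        have h := (hφx t htI x).fun_pow 2
        refine h.congr_deriv ?_
        push_cast
        ring
      exact h1.mul (hBx t htI x)
    have hφc := hφslicecont t htI
    have hPφc := sliceCont Pφ hPφcont t htI
    have hBc := sliceCont B hBcont t htI
    have hAc := sliceCont A hAcont t htI
    have hcont1 : Continuous fun x => 2 * φ t x * Pφ (t, x) * B (t, x) + φ t x ^ 2 * A (t, x) :=
      (((continuous_const.mul hφc).mul hPφc).mul hBc).add ((hφc.pow 2).mul hAc)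
    have hcont2 : Continuous fun x => φ t x ^ 2 * A (t, x) := (hφc.pow 2).mul hAc
    have hsplit : ∀ x : ℝ, Ψ t x
        = (2 * φ t x * Pφ (t, x) * B (t, x) + φ t x ^ 2 * A (t, x)) + φ t x ^ 2 * A (t, x) := by
      intro x; simp only [hΨdef]; ring
    calc (∫ x in (-R')..R', Ψ t x)
        = ∫ x in (-R')..R', ((2 * φ t x * Pφ (t, x) * B (t, x) + φ t x ^ 2 * A (t, x))
            + φ t x ^ 2 * A (t, x)) := by
          simp only [hsplit]
      _ = (∫ x in (-R')..R', (2 * φ t x * Pφ (t, x) * B (t, x) + φ t x ^ 2 * A (t, x)))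
          + ∫ x in (-R')..R', φ t x ^ 2 * A (t, x) :=
          intervalIntegral.integral_add (hcont1.intervalIntegrable _ _)
            (hcont2.intervalIntegrable _ _)
      _ = (φ t R' ^ 2 * B (t, R') - φ t (-R') ^ 2 * B (t, -R'))
          + ∫ x in (-R')..R', φ t x ^ 2 * A (t, x) := by
          rw [intervalIntegral.integral_eq_sub_of_hasDerivAt (fun x _ => hg x)
            (hcont1.intervalIntegrable _ _)]
      _ = ∫ x in (-R')..R', φ t x ^ 2 * A (t, x) := by
          rw [(hzero t htI).1, (hzero t htI).2]; simp
  -- continuity of the energy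
  have hFcont : ContinuousOn F (Icc 0 T) := by
    intro t0 ht0
    have hFeq : F = fun s => ∫ x in Ioc (-R') R', φ s x ^ 2 := by
      funext s; rw [hFdef]; exact intervalIntegral.integral_of_le hR'le
    rw [hFeq]
    show Tendsto _ _ _
    apply MeasureTheory.tendsto_integral_filter_of_dominated_convergence (fun _ => CF)
    · filter_upwards [self_mem_nhdsWithin] with s hs
      exact ((hφslicecont s hs).pow 2).aestronglyMeasurable
    · filter_upwards [self_mem_nhdsWithin] with s hs
      refine (ae_restrict_iff' measurableSet_Ioc).2 (Filter.Eventually.of_forall fun x hx => ?_)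
      have h := hCF (s, x) ⟨hs, Ioc_subset_Icc_self hx⟩
      calc ‖φ s x ^ 2‖ = ‖φ s x * φ s x‖ := by rw [sq]
        _ ≤ CF := h
    · exact integrableOn_const measure_Ioc_lt_top.ne
    · refine Filter.Eventually.of_forall fun x => ?_
      have hcw : ContinuousWithinAt (uncurry φ) S (t0, x) := hΦcont _ (memS ht0 x)
      have htend : Tendsto (fun s : ℝ => ((s, x) : ℝ × ℝ)) (nhdsWithin t0 (Icc 0 T))
          (nhdsWithin (t0, x) S) := by
        apply tendsto_nhdsWithin_of_tendsto_nhds_of_eventually_within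
        · exact ((continuous_id.prodMk continuous_const).tendsto t0).mono_left nhdsWithin_le_nhds
        · filter_upwards [self_mem_nhdsWithin] with s hs
          exact memS hs x
      exact (hcw.tendsto.comp htend).pow 2
  have hFnonneg : ∀ t : ℝ, 0 ≤ F t := fun t =>
    intervalIntegral.integral_nonneg hR'le (fun x _ => sq_nonneg _)
  -- Gronwall
  have hgron : ∀ a ∈ Ioo (0:ℝ) T, ∀ t ∈ Icc a T, F t ≤ F a * Real.exp (CA * (t - a)) := by
    intro a ha t htmem
    have hf' : ∀ s ∈ Ico a T,
        HasDerivWithinAt F (∫ x in (-R')..R', φ s x ^ 2 * A (s, x)) (Ici s) s := by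
      intro s hs
      have hsIoo : s ∈ Ioo (0:ℝ) T := ⟨lt_of_lt_of_le ha.1 hs.1, hs.2⟩
      have h := hFderiv s hsIoo
      rw [hFd2 s (Ioo_subset_Icc_self hsIoo)] at h
      exact h.hasDerivWithinAt
    have hA0 : ‖F a‖ ≤ F a := by
      rw [Real.norm_eq_abs, abs_of_nonneg (hFnonneg a)]
    have hbd : ∀ s ∈ Ico a T,
        ‖∫ x in (-R')..R', φ s x ^ 2 * A (s, x)‖ ≤ CA * ‖F s‖ + 0 := by
      intro s hs
      have hsI : s ∈ Icc (0:ℝ) T := ⟨(lt_of_lt_of_le ha.1 hs.1).le, hs.2.le⟩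
      have hφc := hφslicecont s hsI
      have hAc := sliceCont A hAcont s hsI
      have h1 : ‖∫ x in (-R')..R', φ s x ^ 2 * A (s, x)‖
          ≤ ∫ x in (-R')..R', ‖φ s x ^ 2 * A (s, x)‖ :=
        intervalIntegral.norm_integral_le_integral_norm hR'le
      have h2 : (∫ x in (-R')..R', ‖φ s x ^ 2 * A (s, x)‖)
          ≤ ∫ x in (-R')..R', CA * φ s x ^ 2 := by
        apply intervalIntegral.integral_mono_on hR'le
        · exact (((hφc.pow 2).mul hAc).norm).intervalIntegrable _ _
        · exact (continuous_const.mul (hφc.pow 2)).intervalIntegrable _ _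
        · intro x hx
          have h := hCA (s, x) ⟨hsI, hx⟩
          calc ‖φ s x ^ 2 * A (s, x)‖ = φ s x ^ 2 * ‖A (s, x)‖ := by
                rw [norm_mul]; congr 1; rw [Real.norm_eq_abs, abs_of_nonneg (sq_nonneg _)]
            _ ≤ φ s x ^ 2 * CA := mul_le_mul_of_nonneg_left h (sq_nonneg _)
            _ = CA * φ s x ^ 2 := mul_comm _ _
      have h3 : (∫ x in (-R')..R', CA * φ s x ^ 2) = CA * F s :=
        intervalIntegral.integral_const_mul _ _
      have h4 : ‖F s‖ = F s := by rw [Real.norm_eq_abs, abs_of_nonneg (hFnonneg s)]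
      rw [h4, add_zero]
      calc ‖∫ x in (-R')..R', φ s x ^ 2 * A (s, x)‖
          ≤ ∫ x in (-R')..R', CA * φ s x ^ 2 := le_trans h1 h2
        _ = CA * F s := h3
    have hb := norm_le_gronwallBound_of_norm_deriv_right_le
      (hFcont.mono (Icc_subset_Icc ha.1.le le_rfl)) hf' hA0 hbd t htmem
    rw [gronwallBound_ε0] at hb
    calc F t ≤ ‖F t‖ := le_abs_self _
      _ ≤ F a * Real.exp (CA * (t - a)) := hb
  -- the energy vanishes
  have hF00 : F 0 = 0 := by
    rw [hFdef]
    have h0 : ∀ x : ℝ, φ 0 x ^ 2 = 0 := fun x => by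
      have h := hinit x
      show (u 0 x - v 0 x) ^ 2 = 0
      rw [h]; ring
    simp [h0]
  have hF0 : ∀ t ∈ Icc (0:ℝ) T, F t = 0 := by
    intro t ht
    rcases eq_or_lt_of_le ht.1 with h0 | h0
    · rw [← h0]; exact hF00
    · refine le_antisymm ?_ (hFnonneg t)
      have hmono : nhdsWithin (0:ℝ) (Ioi 0) ≤ nhdsWithin 0 (Icc 0 T) := by
        rw [← nhdsWithin_Ioo_eq_nhdsGT hT]
        exact nhdsWithin_mono 0 Ioo_subset_Icc_self
      have hFt : Tendsto F (nhdsWithin (0:ℝ) (Ioi 0)) (nhds 0) := by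
        have h := hFcont 0 (left_mem_Icc.2 hT.le)
        rw [ContinuousWithinAt, hF00] at h
        exact h.mono_left hmono
      have hexp : Tendsto (fun a => F a * Real.exp (CA * (t - a)))
          (nhdsWithin (0:ℝ) (Ioi 0)) (nhds 0) := by
        have hc : Continuous fun a : ℝ => Real.exp (CA * (t - a)) :=
          Real.continuous_exp.comp (continuous_const.mul (continuous_const.sub continuous_id))
        have h2 : Tendsto (fun a : ℝ => Real.exp (CA * (t - a))) (nhdsWithin (0:ℝ) (Ioi 0))
            (nhds (Real.exp (CA * (t - 0)))) := (hc.tendsto 0).mono_left nhdsWithin_le_nhds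
        simpa using hFt.mul h2
      refine ge_of_tendsto hexp ?_
      have hev : Iio t ∈ nhdsWithin (0:ℝ) (Ioi 0) :=
        nhdsWithin_le_nhds (Iio_mem_nhds h0)
      filter_upwards [self_mem_nhdsWithin, hev] with a ha0 hat
      exact hgron a ⟨ha0, lt_of_lt_of_le hat ht.2⟩ t ⟨le_of_lt hat, ht.2⟩
  -- pointwise vanishing
  have hzero' : ∀ t ∈ Icc (0:ℝ) T, ∀ x : ℝ, u t x = v t x := by
    intro t ht x
    by_cases hxR : R ≤ |x|
    · exact hdecay t ht x hxR
    push_neg at hxR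
    by_contra hne
    have hφne : φ t x ≠ 0 := sub_ne_zero.2 hne
    have hgx : 0 < φ t x ^ 2 := pow_two_pos_of_ne_zero hφne
    have hIeq : (∫ y in Ioc (-R') R', φ t y ^ 2) = 0 := by
      rw [← intervalIntegral.integral_of_le hR'le]
      exact hF0 t ht
    have hcont : Continuous fun y => φ t y ^ 2 := (hφslicecont t ht).pow 2
    have hsupp0 : volume (Function.support (fun y => φ t y ^ 2) ∩ Ioc (-R') R') = 0 := by
      by_contra hpos
      have h1 : 0 < volume (Function.support (fun y => φ t y ^ 2) ∩ Ioc (-R') R') :=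
        lt_of_le_of_ne zero_le (Ne.symm hpos)
      have h2 := (setIntegral_pos_iff_support_of_nonneg_ae
        (Filter.Eventually.of_forall fun y => sq_nonneg (φ t y))
        (hcont.integrableOn_Ioc)).2 h1
      rw [hIeq] at h2
      exact lt_irrefl _ h2
    have hO : IsOpen ({y : ℝ | 0 < φ t y ^ 2} ∩ Ioo (-R') R') :=
      (isOpen_lt continuous_const hcont).inter isOpen_Ioo
    have habs := abs_lt.1 hxR
    have hxO : x ∈ {y : ℝ | 0 < φ t y ^ 2} ∩ Ioo (-R') R' := by
      refine ⟨hgx, ?_, ?_⟩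
      · rw [hR'def]; linarith [habs.1]
      · rw [hR'def]; linarith [habs.2]
    obtain ⟨ε, hεpos, hballs⟩ := Metric.mem_nhds_iff.1 (hO.mem_nhds hxO)
    have hsub : Ioo (x - ε) (x + ε) ⊆ Function.support (fun y => φ t y ^ 2) ∩ Ioc (-R') R' := by
      intro y hy
      have hyO := hballs (by rw [Real.ball_eq_Ioo]; exact hy)
      exact ⟨mem_support.2 (ne_of_gt hyO.1), Ioo_subset_Ioc_self hyO.2⟩
    have hIoo0 : volume (Ioo (x - ε) (x + ε)) = 0 := measure_mono_null hsub hsupp0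
    rw [Real.volume_Ioo] at hIoo0
    have h2ε : (0:ℝ) < x + ε - (x - ε) := by linarith
    exact (ENNReal.ofReal_pos.2 h2ε).ne' hIoo0
  -- assembly
  constructor
  · intro t ht x
    have h := hzero' t ht x
    exact ⟨h, by rw [h]; ring⟩
  · intro t ht x
    have htI : t ∈ Icc (0:ℝ) T := Ioo_subset_Icc_self ht
    have hLHS : pt w t x = pt u t x + pt v t x :=
      ((hptslice u husmooth t ht x).add (hptslice v hvsmooth t ht x)).deriv
    have hBPuPv : B (t, x) = Pu (t, x) + Pv (t, x) :=
      (hwx t htI x).unique ((hux t htI x).add (hvx t htI x))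
    have hinner : (fun y => px (fun s z => (u s z + v s z) ^ 2) t y)
        = fun y => 2 * (w t y * B (t, y)) := by
      funext y
      show deriv (fun z => (u t z + v t z) ^ 2) y = _
      have hd := ((hwx t htI y).pow 2).deriv
      exact hd.trans (by push_cast; ring)
    have hRHS : px (px (fun s z => (u s z + v s z) ^ 2)) t x
        = 2 * (B (t, x) * B (t, x) + w t x * A (t, x)) := by
      show deriv (fun y => px (fun s z => (u s z + v s z) ^ 2) t y) x = _
      rw [hinner]
      exact (((hwx t htI x).mul (hBx t htI x)).const_mul 2).deriv
    rw [hLHS, hRHS, hptu t ht x, hptv t ht x, hBPuPv]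
    have hwtx : w t x = u t x + v t x := rfl
    rw [hwtx]
    ring
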